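/- Let G^{(2m)} be the Grassmann (exterior) algebra on a 2m-dimensional vector space over a field K of characteristic 0, and let UT2(G^{(2m)}) be the algebra of 2×2 upper triangular matrices over G^{(2m)}. Then UT2(G^{(2m)}) satisfies the polynomial identity [x1,x2][x3,x4]⋯[x_{2m+3},x_{2m+4}]=0, i.e., the product of any m+2 commutators of elements of UT2(G^{(2m)}) is zero. -/

import Mathlib

open scoped Pointwise

set_option maxHeartbeats 1000000

/-- Commutator `[a,b] = ab - ba`. -/
def br {R : Type*} [Ring R] (a b : R) : R := a * b - b * a

namespace Stmt4Aux

variable {K : Type*} [Field K] {m : ℕ}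

/-- The image of the vector space inside the exterior algebra. -/
noncomputable def Vhat (K : Type*) [Field K] (m : ℕ) :
    Submodule K (ExteriorAlgebra K (Fin (2 * m) → K)) :=
  LinearMap.range (ExteriorAlgebra.ι K : (Fin (2 * m) → K) →ₗ[K] _)

/-- The filtration by "degree at least k". -/
noncomputable def F (K : Type*) [Field K] (m k : ℕ) :
    Submodule K (ExteriorAlgebra K (Fin (2 * m) → K)) :=
  ⨆ i : ℕ, Vhat K m ^ (k + i)

theorem Vhat_pow_eq_bot : Vhat K m ^ (2 * m + 1) = ⊥ := by
  classical
  set s : Set (ExteriorAlgebra K (Fin (2 * m) → K)) :=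
    Set.range (fun i : Fin (2 * m) => ExteriorAlgebra.ι K (Pi.single i 1)) with hs
  have hle : Vhat K m ≤ Submodule.span K s := by
    rintro x ⟨v, rfl⟩
    have hv : v = ∑ i : Fin (2 * m), v i • (Pi.single i 1 : Fin (2 * m) → K) := by
      ext j
      simp [Finset.sum_apply, Pi.single_apply]
    rw [hv, map_sum]
    refine Submodule.sum_mem _ fun i _ => ?_
    rw [map_smul]
    exact Submodule.smul_mem _ _ (Submodule.subset_span ⟨i, rfl⟩)
  have hmono : ∀ n, Vhat K m ^ n ≤ Submodule.span K s ^ n := by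
    intro n
    induction n with
    | zero => simp
    | succ n ih => rw [pow_succ, pow_succ]; exact mul_le_mul' ih hle
  have hsub : s ^ (2 * m + 1) ⊆ {(0 : ExteriorAlgebra K (Fin (2 * m) → K))} := by
    intro x hx
    rw [Set.mem_pow] at hx
    obtain ⟨f, rfl⟩ := hx
    have hg : ∀ i : Fin (2 * m + 1), ∃ j : Fin (2 * m),
        (f i : ExteriorAlgebra K (Fin (2 * m) → K)) =
          ExteriorAlgebra.ι K (Pi.single j 1) := by
      intro i
      obtain ⟨j, hj⟩ := (f i).2
      exact ⟨j, hj.symm⟩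
    choose g hgf using hg
    have hprod : (List.ofFn fun i => (f i : ExteriorAlgebra K (Fin (2 * m) → K))).prod =
        ExteriorAlgebra.ιMulti K (2 * m + 1)
          (fun i => (Pi.single (g i) 1 : Fin (2 * m) → K)) := by
      rw [ExteriorAlgebra.ιMulti_apply]
      exact congrArg List.prod (congrArg List.ofFn (funext hgf))
    obtain ⟨i, j, hij, hgij⟩ := Fintype.exists_ne_map_eq_of_card_lt g
      (by simp only [Fintype.card_fin]; omega)
    rw [Set.mem_singleton_iff, hprod]
    exact AlternatingMap.map_eq_zero_of_eq _ _ (by rw [hgij]) hij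
  have hspan : Submodule.span K s ^ (2 * m + 1) = ⊥ := by
    rw [Submodule.span_pow]
    refine le_bot_iff.mp ((Submodule.span_le).mpr ?_)
    intro x hx
    have := hsub hx
    simp_all
  exact le_bot_iff.mp ((hmono _).trans hspan.le)

theorem mem_F {k i : ℕ} {x : ExteriorAlgebra K (Fin (2 * m) → K)}
    (h : x ∈ Vhat K m ^ (k + i)) : x ∈ F K m k := by
  unfold F
  exact Submodule.mem_iSup_of_mem i h

theorem F_mul_le {a b : ℕ} : F K m a * F K m b ≤ F K m (a + b) := by
  rw [F, F, Submodule.iSup_mul]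
  refine iSup_le fun i => ?_
  rw [Submodule.mul_iSup]
  refine iSup_le fun j => ?_
  rw [← pow_add, show a + i + (b + j) = a + b + (i + j) by omega]
  exact le_iSup (fun t => Vhat K m ^ (a + b + t)) (i + j)

theorem F_antitone {a b : ℕ} (h : a ≤ b) : F K m b ≤ F K m a := by
  unfold F
  refine iSup_le fun i => ?_
  rw [show b + i = a + (b - a + i) by omega]
  exact le_iSup (fun t => Vhat K m ^ (a + t)) (b - a + i)

theorem mem_F_top (x : ExteriorAlgebra K (Fin (2 * m) → K)) : x ∈ F K m 0 := by
  induction x using ExteriorAlgebra.induction with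
  | algebraMap r =>
    refine mem_F (i := 0) ?_
    simpa using Submodule.algebraMap_mem r
  | ι v =>
    refine mem_F (i := 1) ?_
    simp only [Nat.zero_add, pow_one]
    exact ⟨v, rfl⟩
  | mul x y hx hy =>
    have := F_mul_le (Submodule.mul_mem_mul hx hy)
    simpa using this
  | add x y hx hy => exact add_mem hx hy

theorem mul_mem_F {a b c : ℕ} (habc : c ≤ a + b)
    {x y : ExteriorAlgebra K (Fin (2 * m) → K)}
    (hx : x ∈ F K m a) (hy : y ∈ F K m b) : x * y ∈ F K m c :=
  F_antitone habc (F_mul_le (Submodule.mul_mem_mul hx hy))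

theorem F_bot {k : ℕ} (h : 2 * m + 1 ≤ k) : F K m k = ⊥ := by
  unfold F
  refine le_bot_iff.mp (iSup_le fun i => ?_)
  rw [show k + i = (2 * m + 1) + (k + i - (2 * m + 1)) by omega, pow_add,
    Vhat_pow_eq_bot, Submodule.bot_mul]

theorem ι_mem_F1 (v : Fin (2 * m) → K) : ExteriorAlgebra.ι K v ∈ F K m 1 := by
  refine mem_F (i := 0) ?_
  simp only [Nat.add_zero, pow_one]
  exact ⟨v, rfl⟩

theorem exists_scalar (x : ExteriorAlgebra K (Fin (2 * m) → K)) :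
    ∃ c : K, x - algebraMap K _ c ∈ F K m 1 := by
  induction x using ExteriorAlgebra.induction with
  | algebraMap r => exact ⟨r, by simp⟩
  | ι v =>
    refine ⟨0, ?_⟩
    rw [map_zero, sub_zero]
    exact ι_mem_F1 v
  | mul x y hx hy =>
    obtain ⟨c1, h1⟩ := hx
    obtain ⟨c2, h2⟩ := hy
    refine ⟨c1 * c2, ?_⟩
    have key : x * y - algebraMap K _ (c1 * c2) =
        (x - algebraMap K _ c1) * (y - algebraMap K _ c2)
        + (x - algebraMap K _ c1) * algebraMap K _ c2
        + algebraMap K _ c1 * (y - algebraMap K _ c2) := by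
      rw [map_mul]
      noncomm_ring
    have hm1 : (x - algebraMap K _ c1) * algebraMap K _ c2 ∈ F K m 1 := by
      rw [Algebra.algebraMap_eq_smul_one (A := ExteriorAlgebra K (Fin (2 * m) → K)) c2,
        mul_smul_comm, mul_one]
      exact Submodule.smul_mem _ _ h1
    have hm2 : algebraMap K (ExteriorAlgebra K (Fin (2 * m) → K)) c1
        * (y - algebraMap K _ c2) ∈ F K m 1 := by
      rw [Algebra.algebraMap_eq_smul_one (A := ExteriorAlgebra K (Fin (2 * m) → K)) c1,
        smul_mul_assoc, one_mul]
      exact Submodule.smul_mem _ _ h2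
    rw [key]
    exact add_mem (add_mem (F_antitone (by norm_num) (F_mul_le
      (Submodule.mul_mem_mul h1 h2))) hm1) hm2
  | add x y hx hy =>
    obtain ⟨c1, h1⟩ := hx
    obtain ⟨c2, h2⟩ := hy
    refine ⟨c1 + c2, ?_⟩
    have : x + y - algebraMap K _ (c1 + c2) =
        (x - algebraMap K _ c1) + (y - algebraMap K _ c2) := by
      rw [map_add]; abel
    rw [this]
    exact add_mem h1 h2

theorem br_mem_F2 (x y : ExteriorAlgebra K (Fin (2 * m) → K)) :
    br x y ∈ F K m 2 := by
  obtain ⟨c1, h1⟩ := exists_scalar x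
  obtain ⟨c2, h2⟩ := exists_scalar y
  set u := x - algebraMap K _ c1 with hu
  set w := y - algebraMap K _ c2 with hw
  have hx : x = u + algebraMap K _ c1 := by rw [hu]; abel
  have hy : y = w + algebraMap K _ c2 := by rw [hw]; abel
  have expand : (u + algebraMap K _ c1) * (w + algebraMap K _ c2)
      - (w + algebraMap K _ c2) * (u + algebraMap K _ c1)
      = (u * w - w * u)
        + (u * algebraMap K _ c2 - algebraMap K _ c2 * u)
        + (algebraMap K _ c1 * w - w * algebraMap K _ c1)
        + (algebraMap K (ExteriorAlgebra K (Fin (2 * m) → K)) c1 * algebraMap K _ c2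
            - algebraMap K _ c2 * algebraMap K _ c1) := by
    noncomm_ring
  have key : br x y = u * w - w * u := by
    rw [br, hx, hy, expand, Algebra.commutes c2 u, Algebra.commutes c1 w,
      Algebra.commutes c1 (algebraMap K _ c2)]
    simp
  rw [key]
  exact sub_mem (mul_mem_F (le_refl 2) h1 h2) (mul_mem_F (le_refl 2) h2 h1)

theorem prod_good (L : List (Matrix (Fin 2) (Fin 2) (ExteriorAlgebra K (Fin (2 * m) → K))))
    (h : ∀ M ∈ L, M 1 0 = 0 ∧ M 0 0 ∈ F K m 2 ∧ M 1 1 ∈ F K m 2) :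
    L.prod 1 0 = 0 ∧ L.prod 0 0 ∈ F K m (2 * L.length)
      ∧ L.prod 1 1 ∈ F K m (2 * L.length) ∧ L.prod 0 1 ∈ F K m (2 * L.length - 2) := by
  induction L with
  | nil =>
    refine ⟨Matrix.one_apply_ne (by decide), ?_, ?_, ?_⟩ <;>
      simp [Matrix.one_apply, mem_F_top]
  | cons C L ih =>
    obtain ⟨hC10, hC00, hC11⟩ := h C List.mem_cons_self
    obtain ⟨hP10, hP00, hP11, hP01⟩ := ih (fun M hM => h M (List.mem_cons_of_mem _ hM))
    set P := L.prod with hP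
    have hmul : ∀ i j, (C * P) i j = C i 0 * P 0 j + C i 1 * P 1 j := by
      intro i j
      rw [Matrix.mul_apply, Fin.sum_univ_two]
    rw [List.prod_cons, List.length_cons]
    refine ⟨?_, ?_, ?_, ?_⟩
    · rw [hmul, hC10, hP10, zero_mul, mul_zero, add_zero]
    · rw [hmul, hP10, mul_zero, add_zero]
      exact mul_mem_F (by omega) hC00 hP00
    · rw [hmul, hC10, zero_mul, zero_add]
      exact mul_mem_F (by omega) hC11 hP11
    · rw [hmul]
      exact add_mem (mul_mem_F (by omega) hC00 hP01)
        (mul_mem_F (by omega) (mem_F_top _) hP11)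

end Stmt4Aux

/-- The algebra `UT2(G^{(2m)})` of upper triangular `2×2` matrices over the Grassmann algebra
of a `2m`-dimensional vector space over a field of characteristic zero satisfies
`[x1,x2][x3,x4]⋯[x_{2m+3},x_{2m+4}] = 0`: every product of `m+2` commutators vanishes. -/
theorem stmt4 {K : Type*} [Field K] [CharZero K] (m : ℕ)
    (a : ℕ → Matrix (Fin 2) (Fin 2) (ExteriorAlgebra K (Fin (2 * m) → K)))
    (ha : ∀ i, a i 1 0 = 0) :
    (List.ofFn (fun i : Fin (m + 2) => br (a (2 * i)) (a (2 * i + 1)))).prod = 0 := by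
  set L := List.ofFn (fun i : Fin (m + 2) => br (a (2 * i)) (a (2 * i + 1))) with hL
  have hmem : ∀ M ∈ L, M 1 0 = 0 ∧ M 0 0 ∈ Stmt4Aux.F K m 2 ∧ M 1 1 ∈ Stmt4Aux.F K m 2 := by
    intro M hM
    rw [hL, List.mem_ofFn] at hM
    obtain ⟨i, rfl⟩ := hM
    have hA10 : a (2 * (i : ℕ)) 1 0 = 0 := ha _
    have hB10 : a (2 * (i : ℕ) + 1) 1 0 = 0 := ha _
    have hentry : ∀ j k, (br (a (2 * (i : ℕ))) (a (2 * (i : ℕ) + 1))) j k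
        = a (2 * (i : ℕ)) j 0 * a (2 * (i : ℕ) + 1) 0 k
          + a (2 * (i : ℕ)) j 1 * a (2 * (i : ℕ) + 1) 1 k
          - (a (2 * (i : ℕ) + 1) j 0 * a (2 * (i : ℕ)) 0 k
            + a (2 * (i : ℕ) + 1) j 1 * a (2 * (i : ℕ)) 1 k) := by
      intro j k
      simp [br, Matrix.sub_apply, Matrix.mul_apply, Fin.sum_univ_two]
    refine ⟨?_, ?_, ?_⟩
    · show (br (a (2 * (i : ℕ))) (a (2 * (i : ℕ) + 1))) 1 0 = 0
      rw [hentry, hA10, hB10]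
      simp
    · show (br (a (2 * (i : ℕ))) (a (2 * (i : ℕ) + 1))) 0 0 ∈ Stmt4Aux.F K m 2
      rw [hentry, hA10, hB10]
      have heq : a (2 * (i : ℕ)) 0 0 * a (2 * (i : ℕ) + 1) 0 0 + a (2 * (i : ℕ)) 0 1 * 0
          - (a (2 * (i : ℕ) + 1) 0 0 * a (2 * (i : ℕ)) 0 0 + a (2 * (i : ℕ) + 1) 0 1 * 0)
          = br (a (2 * (i : ℕ)) 0 0) (a (2 * (i : ℕ) + 1) 0 0) := by
        rw [br]; noncomm_ring
      rw [heq]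
      exact Stmt4Aux.br_mem_F2 _ _
    · show (br (a (2 * (i : ℕ))) (a (2 * (i : ℕ) + 1))) 1 1 ∈ Stmt4Aux.F K m 2
      rw [hentry, hA10, hB10]
      have heq : 0 * a (2 * (i : ℕ) + 1) 0 1 + a (2 * (i : ℕ)) 1 1 * a (2 * (i : ℕ) + 1) 1 1
          - (0 * a (2 * (i : ℕ)) 0 1
            + a (2 * (i : ℕ) + 1) 1 1 * a (2 * (i : ℕ)) 1 1)
          = br (a (2 * (i : ℕ)) 1 1) (a (2 * (i : ℕ) + 1) 1 1) := by
        rw [br]; noncomm_ring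
      rw [heq]
      exact Stmt4Aux.br_mem_F2 _ _
  obtain ⟨h10, h00, h11, h01⟩ := Stmt4Aux.prod_good L hmem
  have hlen : L.length = m + 2 := by rw [hL, List.length_ofFn]
  rw [hlen] at h00 h11 h01
  rw [Stmt4Aux.F_bot (by omega)] at h00 h11
  rw [Stmt4Aux.F_bot (by omega)] at h01
  ext j k
  fin_cases j <;> fin_cases k <;> simp_all [Submodule.mem_bot]
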